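/- arXiv:1305.5500 — 3 statements merged into one kernel-verified Lean document; each statement's English description precedes it below -/
import Mathlib

section
/- Let ζ(ν) be the moment matrix of a probability distribution ν on {-1,1}^k, let 0 < δ < 1, and let ζ = (1−δ)·ζ(ν) + δ·I_{k+1}. Then the covariance matrix Σ of ζ, defined by Σ_{ij} = ζ(i,j) − ζ(0,i)·ζ(0,j) for i,j ∈ [k], is symmetric positive definite with every eigenvalue at least δ. -/
open Matrix

/-- For `ζ = (1−δ)·ζ(ν) + δ·I` with `ζ(ν)` the moment matrix of a
distribution `ν` on `{-1,1}^k` and `0 < δ < 1`, the covariance matrix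
`Σ_{ij} = ζ(i,j) − ζ(0,i)ζ(0,j)` is symmetric positive definite with all
eigenvalues at least `δ`, i.e. `xᵀΣx ≥ δ‖x‖²` for all `x`. -/
theorem smoothed_covariance_posDef (k : ℕ) (δ : ℝ) (hδ0 : 0 < δ) (hδ1 : δ < 1)
    (w : (Fin k → Bool) → ℝ) (hw0 : ∀ b, 0 ≤ w b) (hw1 : ∑ b : Fin k → Bool, w b = 1) :
    let sgn : Bool → ℝ := fun b => if b then 1 else -1
    let m1 : Fin k → ℝ := fun i => ∑ b : Fin k → Bool, w b * sgn (b i)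
    let m2 : Fin k → Fin k → ℝ := fun i j => ∑ b : Fin k → Bool, w b * sgn (b i) * sgn (b j)
    let S : Matrix (Fin k) (Fin k) ℝ := Matrix.of fun i j =>
      (if i = j then 1 else (1 - δ) * m2 i j) - ((1 - δ) * m1 i) * ((1 - δ) * m1 j)
    S.IsSymm ∧ S.PosDef ∧ ∀ x : Fin k → ℝ, δ * (x ⬝ᵥ x) ≤ x ⬝ᵥ S.mulVec x := by
  intro sgn m1 m2 S
  have hsgn : ∀ b : Bool, sgn b * sgn b = 1 := by
    intro b; cases b <;> simp [sgn]
  have hm2diag : ∀ i, m2 i i = 1 := by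
    intro i
    have h : ∀ b : Fin k → Bool, w b * sgn (b i) * sgn (b i) = w b := by
      intro b; rw [mul_assoc, hsgn, mul_one]
    simp only [m2]
    rw [Finset.sum_congr rfl (fun b _ => h b), hw1]
  have hm2symm : ∀ i j, m2 i j = m2 j i := by
    intro i j
    apply Finset.sum_congr rfl
    intro b _; ring
  have hSentry : ∀ i j, S i j = (1 - δ) * m2 i j + (if i = j then δ else 0)
      - (1 - δ) ^ 2 * (m1 i * m1 j) := by
    intro i j
    simp only [S, Matrix.of_apply]
    by_cases h : i = j
    · subst h; simp only [eq_self_iff_true, if_true, hm2diag]; ring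
    · simp only [if_neg h]; ring
  -- quadratic form identity
  have key : ∀ x : Fin k → ℝ,
      x ⬝ᵥ S.mulVec x
        = δ * (x ⬝ᵥ x)
          + (1 - δ) * (∑ b : Fin k → Bool, w b * (∑ i, x i * sgn (b i)) ^ 2)
          - (1 - δ) ^ 2 * (∑ b : Fin k → Bool, w b * (∑ i, x i * sgn (b i))) ^ 2 := by
    intro x
    have hL : ∑ i, x i * m1 i = ∑ b : Fin k → Bool, w b * (∑ i, x i * sgn (b i)) := by
      simp only [m1, Finset.mul_sum]
      rw [Finset.sum_comm]
      exact Finset.sum_congr rfl fun i _ => Finset.sum_congr rfl fun b _ => by ring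
    have hQ : ∑ i, x i * (∑ j, m2 i j * x j)
        = ∑ b : Fin k → Bool, w b * (∑ i, x i * sgn (b i)) ^ 2 := by
      have h1 : ∀ b : Fin k → Bool, w b * (∑ i, x i * sgn (b i)) ^ 2
          = ∑ i, x i * (∑ j, (w b * sgn (b i) * sgn (b j)) * x j) := by
        intro b
        rw [sq, Finset.sum_mul_sum, Finset.mul_sum]
        refine Finset.sum_congr rfl fun i _ => ?_
        rw [Finset.mul_sum, Finset.mul_sum]
        exact Finset.sum_congr rfl fun j _ => by ring
      rw [Finset.sum_congr rfl (fun b _ => h1 b), Finset.sum_comm]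
      refine Finset.sum_congr rfl fun i _ => ?_
      rw [← Finset.mul_sum]
      congr 1
      rw [Finset.sum_comm]
      refine Finset.sum_congr rfl fun j _ => ?_
      simp only [m2, Finset.sum_mul]
    have hrow : ∀ i, (∑ j, S i j * x j)
        = (1 - δ) * (∑ j, m2 i j * x j) + δ * x i
          - (1 - δ) ^ 2 * m1 i * (∑ j, x j * m1 j) := by
      intro i
      have h2 : ∑ j, S i j * x j
          = ∑ j, ((1 - δ) * (m2 i j * x j) + (if i = j then δ * x j else 0)
              - ((1 - δ) ^ 2 * m1 i) * (x j * m1 j)) := by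
        refine Finset.sum_congr rfl fun j _ => ?_
        rw [hSentry i j]
        by_cases h : i = j
        · simp only [if_pos h]; ring
        · simp only [if_neg h]; ring
      rw [h2, Finset.sum_sub_distrib, Finset.sum_add_distrib, ← Finset.mul_sum,
        ← Finset.mul_sum, Finset.sum_ite_eq]
      simp only [Finset.mem_univ, if_true]
    calc x ⬝ᵥ S.mulVec x = ∑ i, x i * (∑ j, S i j * x j) := rfl
      _ = ∑ i, ((1 - δ) * (x i * (∑ j, m2 i j * x j)) + δ * (x i * x i)
            - (1 - δ) ^ 2 * ((x i * m1 i) * (∑ j, x j * m1 j))) := by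
          refine Finset.sum_congr rfl fun i _ => ?_
          rw [hrow i]; ring
      _ = (1 - δ) * (∑ i, x i * (∑ j, m2 i j * x j)) + δ * (∑ i, x i * x i)
            - (1 - δ) ^ 2 * ((∑ i, x i * m1 i) * (∑ j, x j * m1 j)) := by
          simp only [Finset.sum_sub_distrib, Finset.sum_add_distrib, ← Finset.mul_sum,
            Finset.sum_mul]
      _ = _ := by
          rw [hQ, hL]
          simp only [dotProduct]
          ring
  -- Cauchy-Schwarz / variance nonnegativity
  have hvar : ∀ x : Fin k → ℝ,
      (∑ b : Fin k → Bool, w b * (∑ i, x i * sgn (b i))) ^ 2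
        ≤ ∑ b : Fin k → Bool, w b * (∑ i, x i * sgn (b i)) ^ 2 := by
    intro x
    set f : (Fin k → Bool) → ℝ := fun b => ∑ i, x i * sgn (b i) with hf
    set L : ℝ := ∑ b : Fin k → Bool, w b * f b with hLdef
    have h0 : 0 ≤ ∑ b : Fin k → Bool, w b * (f b - L) ^ 2 :=
      Finset.sum_nonneg fun b _ => mul_nonneg (hw0 b) (sq_nonneg _)
    have hexp : ∑ b : Fin k → Bool, w b * (f b - L) ^ 2
        = (∑ b : Fin k → Bool, w b * (f b) ^ 2) - L ^ 2 := by
      have h1 : ∀ b : Fin k → Bool, w b * (f b - L) ^ 2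
          = w b * (f b) ^ 2 - 2 * L * (w b * f b) + L ^ 2 * w b := fun b => by ring
      rw [Finset.sum_congr rfl fun b _ => h1 b]
      rw [Finset.sum_add_distrib, Finset.sum_sub_distrib, ← Finset.mul_sum, ← Finset.mul_sum,
        hw1, ← hLdef]
      ring
    rw [hexp] at h0
    linarith
  -- main lower bound
  have hbound : ∀ x : Fin k → ℝ, δ * (x ⬝ᵥ x) ≤ x ⬝ᵥ S.mulVec x := by
    intro x
    rw [key x]
    set Q : ℝ := ∑ b : Fin k → Bool, w b * (∑ i, x i * sgn (b i)) ^ 2 with hQdef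
    set L : ℝ := ∑ b : Fin k → Bool, w b * (∑ i, x i * sgn (b i)) with hLdef
    have h1 : L ^ 2 ≤ Q := hvar x
    have h2 : (0:ℝ) ≤ L ^ 2 := sq_nonneg _
    have h3 : (0:ℝ) ≤ (1 - δ) * (Q - L ^ 2) :=
      mul_nonneg (by linarith) (by linarith)
    have h4 : (0:ℝ) ≤ δ * (1 - δ) * L ^ 2 :=
      mul_nonneg (mul_nonneg hδ0.le (by linarith)) h2
    nlinarith [h3, h4]
  have hsymm : S.IsSymm := by
    ext i j
    simp only [Matrix.transpose_apply, S, Matrix.of_apply]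
    rw [hm2symm j i]
    by_cases h : i = j
    · subst h; ring
    · rw [if_neg (fun hh => h hh.symm), if_neg h]; ring
  refine ⟨hsymm, Matrix.posDef_iff_dotProduct_mulVec.mpr ⟨?_, ?_⟩, hbound⟩
  · -- IsHermitian
    ext i j
    simp only [Matrix.conjTranspose_apply, star_trivial]
    exact congrFun (congrFun hsymm i) j
  · intro x hx
    have hxx : 0 < x ⬝ᵥ x := by
      rcases lt_or_eq_of_le (Finset.sum_nonneg fun i _ => mul_self_nonneg (x i)) with h | h
      · exact h
      · exact absurd (dotProduct_self_eq_zero.mp h.symm) hx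
    have := hbound x
    have hpos : 0 < x ⬝ᵥ S.mulVec x := lt_of_lt_of_le (mul_pos hδ0 hxx) this
    simpa using hpos
end

section
/- Let X ∈ ℝ^{t×t} be a symmetric matrix and Z ∈ ℝ^t a vector with |X_{ij}| ≤ β/(t+1) for all i,j and |Z_i| ≤ β/(t+1) for all i, where 0 < β ≤ 1/2. Then for any d ≥ t+1 there exist vectors y_1,...,y_t ∈ [-1,1]^d such that ⟨y_i, y_j⟩ = X_{ij} for i ≠ j, ⟨y_i, y_i⟩ = X_{ii} + β, and ⟨y_i, 1⟩ = Z_i for all i, where 1 ∈ ℝ^d is the all-ones vector. -/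
open Finset Matrix



/-- A symmetric diagonally dominant real matrix with nonneg diagonal is PSD. -/
theorem posSemidef_of_diagdom {m : ℕ} (A : Matrix (Fin m) (Fin m) ℝ)
    (hsymm : ∀ i j, A i j = A j i)
    (hdom : ∀ i, (∑ j, if j = i then 0 else |A i j|) ≤ A i i) : A.PosSemidef := by
  refine posSemidef_iff_dotProduct_mulVec.mpr ⟨?_, ?_⟩
  · ext i j
    simp [Matrix.conjTranspose_apply, hsymm i j]
  · intro x
    have hx : star x = x := by simp
    have expand : dotProduct (star x) (A.mulVec x) = ∑ i, ∑ j, A i j * x i * x j := by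
      rw [hx]
      simp only [dotProduct, Matrix.mulVec, Finset.mul_sum]
      exact Finset.sum_congr rfl fun i _ => Finset.sum_congr rfl fun j _ => by ring
    rw [expand]
    have step1 : ∀ i j : Fin m,
        (if j = i then A i i * x i ^ 2 else -(|A i j| * (x i ^ 2 + x j ^ 2) / 2))
          ≤ A i j * x i * x j := by
      intro i j
      split
      · next h => subst h; exact le_of_eq (by ring)
      · have h1 : |x i * x j| ≤ (x i ^ 2 + x j ^ 2) / 2 := by
          rw [abs_mul]
          nlinarith [sq_nonneg (|x i| - |x j|), sq_abs (x i), sq_abs (x j)]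
        have h2 := mul_le_mul_of_nonneg_left h1 (abs_nonneg (A i j))
        have h3 : -|A i j * (x i * x j)| ≤ A i j * (x i * x j) := neg_abs_le _
        rw [abs_mul] at h3
        nlinarith
    have sum1 : ∑ i, ∑ j, (if j = i then A i i * x i ^ 2
          else -(|A i j| * (x i ^ 2 + x j ^ 2) / 2)) ≤ ∑ i, ∑ j, A i j * x i * x j :=
      Finset.sum_le_sum fun i _ => Finset.sum_le_sum fun j _ => step1 i j
    -- now compute the LHS lower bound
    have swap : ∑ i, ∑ j, (if j = i then 0 else |A i j| * x j ^ 2)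
          = ∑ i, ∑ j, (if j = i then 0 else |A i j| * x i ^ 2) := by
      rw [Finset.sum_comm]
      refine Finset.sum_congr rfl fun i _ => Finset.sum_congr rfl fun j _ => ?_
      by_cases h : i = j
      · simp [h]
      · rw [if_neg h, if_neg (Ne.symm h), hsymm j i]
    have decomp : ∀ i j : Fin m,
        (if j = i then A i i * x i ^ 2 else -(|A i j| * (x i ^ 2 + x j ^ 2) / 2))
        = (if j = i then A i i * x i ^ 2 else 0)
          - (1/2) * (if j = i then 0 else |A i j| * x i ^ 2)
          - (1/2) * (if j = i then 0 else |A i j| * x j ^ 2) := by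
      intro i j; split <;> ring
    have rowsum : ∀ i : Fin m, ∑ j, (if j = i then A i i * x i ^ 2
          else -(|A i j| * (x i ^ 2 + x j ^ 2) / 2))
        = A i i * x i ^ 2 - (1/2) * (∑ j, if j = i then 0 else |A i j| * x i ^ 2)
          - (1/2) * (∑ j, if j = i then 0 else |A i j| * x j ^ 2) := by
      intro i
      rw [Finset.sum_congr rfl (fun j _ => decomp i j), Finset.sum_sub_distrib,
        Finset.sum_sub_distrib, Fintype.sum_ite_eq' i (fun _ => A i i * x i ^ 2),
        ← Finset.mul_sum, ← Finset.mul_sum]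
    have lhs_eq : ∑ i, ∑ j, (if j = i then A i i * x i ^ 2
          else -(|A i j| * (x i ^ 2 + x j ^ 2) / 2))
        = ∑ i, (A i i * x i ^ 2 - (∑ j, if j = i then 0 else |A i j|) * x i ^ 2) := by
      rw [Finset.sum_congr rfl (fun i _ => rowsum i), Finset.sum_sub_distrib,
        Finset.sum_sub_distrib, ← Finset.mul_sum, ← Finset.mul_sum, swap]
      have hT : ∑ i, (∑ j, if j = i then 0 else |A i j|) * x i ^ 2
          = ∑ i, ∑ j, (if j = i then 0 else |A i j| * x i ^ 2) :=
        Finset.sum_congr rfl fun i _ => by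
          rw [Finset.sum_mul]
          exact Finset.sum_congr rfl fun j _ => by split <;> ring
      rw [Finset.sum_sub_distrib, hT]
      ring
    have lower : (0:ℝ) ≤ ∑ i, (A i i * x i ^ 2 - (∑ j, if j = i then 0 else |A i j|) * x i ^ 2) := by
      refine Finset.sum_nonneg fun i _ => ?_
      have := hdom i
      nlinarith [sq_nonneg (x i)]
    rw [← lhs_eq] at lower
    exact le_trans lower sum1


theorem pad_sum {d m : ℕ} (h : m ≤ d) (f : Fin m → ℝ) :
    ∑ l : Fin d, (if h' : (l : ℕ) < m then f ⟨l, h'⟩ else 0) = ∑ k : Fin m, f k := by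
  rw [Fin.sum_univ_eq_sum_range (fun n => if h' : n < m then f ⟨n, h'⟩ else 0) d]
  rw [← Finset.sum_subset (Finset.range_subset_range.mpr h)
    (fun n _ hn => dif_neg (by simpa using hn))]
  rw [← Fin.sum_univ_eq_sum_range (fun n => if h' : n < m then f ⟨n, h'⟩ else 0) m]
  exact Finset.sum_congr rfl fun k _ => by rw [dif_pos k.isLt]

open scoped MatrixOrder in
/-- Realize a PSD matrix with `Y i0 i0 = m` as a Gram matrix whose `i0`-th vector is all-ones. -/
theorem gram_realize {m : ℕ} (Y : Matrix (Fin m) (Fin m) ℝ) (hY : Y.PosSemidef)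
    (i0 : Fin m) (hY0 : Y i0 i0 = (m : ℝ)) :
    ∃ a : Fin m → Fin m → ℝ,
      (∀ p q, ∑ l, a p l * a q l = Y p q) ∧ (∀ l, a i0 l = 1) := by
  set S := CFC.sqrt Y with hSdef
  have hS2 : S * S = Y := CFC.sqrt_mul_sqrt_self Y hY.nonneg
  have hSsymm : ∀ i j, S i j = S j i := fun i j => by
    have h := (CFC.sqrt_nonneg Y).posSemidef.1.apply j i
    simpa using h
  have hbb : ∀ p q : Fin m, ∑ l, S l p * S l q = Y p q := by
    intro p q
    have : (S * S) p q = Y p q := by rw [hS2]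
    rw [← this, Matrix.mul_apply]
    exact Finset.sum_congr rfl fun l _ => by rw [hSsymm p l]
  set w : Fin m → ℝ := fun l => S l i0 - 1 with hw
  set dww : ℝ := ∑ l, w l * w l with hdww
  set c : Fin m → ℝ := fun k => if dww = 0 then 0 else 2 * (∑ l, S l k * w l) / dww with hc
  set a : Fin m → Fin m → ℝ := fun k l => S l k - c k * w l with ha
  have hdww_nonneg : 0 ≤ dww := Finset.sum_nonneg fun l _ => mul_self_nonneg _
  have hdww0 : dww = 0 → ∀ l, w l = 0 := by
    intro h0 l
    have hsum : ∑ l, w l * w l = 0 := by rw [← hdww]; exact h0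
    exact mul_self_eq_zero.1 (((Finset.sum_eq_zero_iff_of_nonneg
      (fun l _ => mul_self_nonneg (w l))).1 hsum) l (mem_univ l))
  have haa : ∀ p q, ∑ l, a p l * a q l = Y p q := by
    intro p q
    have expand : ∑ l, a p l * a q l
        = (∑ l, S l p * S l q) - c p * (∑ l, S l q * w l)
          - c q * (∑ l, S l p * w l) + c p * c q * dww := by
      rw [hdww]
      simp only [Finset.mul_sum]
      rw [← Finset.sum_sub_distrib, ← Finset.sum_sub_distrib, ← Finset.sum_add_distrib]
      exact Finset.sum_congr rfl fun l _ => by simp only [ha]; ring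
    rw [expand, hbb p q]
    by_cases h0 : dww = 0
    · have hcz : ∀ k, c k = 0 := fun k => by simp [hc, h0]
      rw [hcz p, hcz q, h0]; ring
    · simp only [hc, if_neg h0]
      field_simp
      ring
  have ha0 : ∀ l, a i0 l = 1 := by
    intro l
    by_cases h0 : dww = 0
    · have hwl := hdww0 h0 l
      have : S l i0 = 1 := by have := hwl; simp only [hw] at this; linarith
      simp [ha, hc, h0, this]
    · have e1 : ∑ l, S l i0 * S l i0 = (m : ℝ) := by rw [hbb i0 i0, hY0]
      have hcard : ∑ _l : Fin m, (1:ℝ) = (m:ℝ) := by simp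
      have e2 : dww = 2 * (∑ l, S l i0 * w l) := by
        have h1 : dww = (∑ l, S l i0 * S l i0) - 2 * (∑ l, S l i0) + (m:ℝ) := by
          rw [hdww, ← hcard]
          simp only [Finset.mul_sum]
          rw [← Finset.sum_sub_distrib, ← Finset.sum_add_distrib]
          exact Finset.sum_congr rfl fun l _ => by simp only [hw]; ring
        have h2 : ∑ l, S l i0 * w l = (∑ l, S l i0 * S l i0) - (∑ l, S l i0) := by
          rw [← Finset.sum_sub_distrib]
          exact Finset.sum_congr rfl fun l _ => by simp only [hw]; ring
        rw [h1, h2, e1]; ring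
      have hc1 : c i0 = 1 := by
        simp only [hc, if_neg h0, ← e2]
        field_simp
      simp only [ha, hc1, hw]; ring
  exact ⟨a, haa, ha0⟩


/-- realizability of small moment data by vectors in `[-1,1]^d`. -/
theorem realizable_vectors (t d : ℕ) (β : ℝ) (hβ0 : 0 < β) (hβ : β ≤ 1 / 2)
    (hd : t + 1 ≤ d) (X : Matrix (Fin t) (Fin t) ℝ) (hX : X.IsSymm) (Z : Fin t → ℝ)
    (hXb : ∀ i j, |X i j| ≤ β / (t + 1)) (hZb : ∀ i, |Z i| ≤ β / (t + 1)) :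
    ∃ y : Fin t → Fin d → ℝ,
      (∀ i l, y i l ∈ Set.Icc (-1 : ℝ) 1) ∧
      (∀ i j, i ≠ j → ∑ l, y i l * y j l = X i j) ∧
      (∀ i, ∑ l, y i l * y i l = X i i + β) ∧
      (∀ i, ∑ l, y i l = Z i) := by
  have ht1 : (0:ℝ) < (t:ℝ) + 1 := by positivity
  have hc0 : (0:ℝ) ≤ β / ((t:ℝ) + 1) := by positivity
  have hXsym : ∀ p q, X p q = X q p := fun p q => Matrix.IsSymm.apply hX q p
  set Y : Matrix (Fin (t+1)) (Fin (t+1)) ℝ := Matrix.of fun i j =>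
    Fin.cases (Fin.cases ((t:ℝ)+1) (fun b => Z b) j)
      (fun p => Fin.cases (Z p) (fun q => if p = q then X p q + β else X p q) j) i
    with hYdef
  have hY00 : Y 0 0 = (t:ℝ)+1 := by simp [hYdef]
  have hY0s : ∀ q : Fin t, Y 0 q.succ = Z q := fun q => by simp [hYdef]
  have hYs0 : ∀ p : Fin t, Y p.succ 0 = Z p := fun p => by simp [hYdef]
  have hYss : ∀ p q : Fin t, Y p.succ q.succ = if p = q then X p q + β else X p q :=
    fun p q => by simp [hYdef]
  have hsymm : ∀ i j, Y i j = Y j i := by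
    intro i j
    induction i using Fin.cases with
    | zero =>
      induction j using Fin.cases with
      | zero => rfl
      | succ q => rw [hY0s, hYs0]
    | succ p =>
      induction j using Fin.cases with
      | zero => rw [hY0s, hYs0]
      | succ q =>
        rw [hYss, hYss]
        by_cases h : p = q
        · subst h; simp
        · rw [if_neg h, if_neg (Ne.symm h), hXsym p q]
  have hdom : ∀ i, (∑ j, if j = i then 0 else |Y i j|) ≤ Y i i := by
    intro i
    induction i using Fin.cases with
    | zero =>
      rw [Fin.sum_univ_succ, hY00, if_pos rfl, zero_add]
      have he : ∀ q : Fin t, (if q.succ = 0 then (0:ℝ) else |Y 0 q.succ|) = |Z q| :=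
        fun q => by rw [if_neg (Fin.succ_ne_zero q), hY0s]
      rw [Finset.sum_congr rfl fun q _ => he q]
      have h1 : ∑ q : Fin t, |Z q| ≤ ∑ _q : Fin t, β / ((t:ℝ)+1) :=
        Finset.sum_le_sum fun q _ => hZb q
      have h2 : ∑ _q : Fin t, β / ((t:ℝ)+1) = (t:ℝ) * (β / ((t:ℝ)+1)) := by
        simp [mul_comm]
      have h3 : β / ((t:ℝ)+1) ≤ 1 := by
        rw [div_le_one ht1]; linarith
      nlinarith [Nat.cast_nonneg (α := ℝ) t]
    | succ p =>
      rw [Fin.sum_univ_succ]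
      have h0 : (if (0 : Fin (t+1)) = p.succ then (0:ℝ) else |Y p.succ 0|) = |Z p| := by
        rw [if_neg (Fin.succ_ne_zero p).symm, hYs0]
      have he : ∀ q : Fin t, (if q.succ = p.succ then (0:ℝ) else |Y p.succ q.succ|)
          = (if q = p then 0 else |X p q|) := by
        intro q
        by_cases h : q = p
        · rw [if_pos h, if_pos (by rw [h])]
        · rw [if_neg h, if_neg (fun hc => h (Fin.succ_inj.mp hc)), hYss,
            if_neg (fun hc => h hc.symm)]
      rw [h0, Finset.sum_congr rfl fun q _ => he q]
      have hterm : ∀ q : Fin t, (if q = p then (0:ℝ) else |X p q|)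
          ≤ (if q = p then 0 else β / ((t:ℝ)+1)) := by
        intro q; split
        · exact le_refl _
        · exact hXb p q
      have h1 := Finset.sum_le_sum fun q (_ : q ∈ univ) => hterm q
      have h2 : ∑ q : Fin t, (if q = p then (0:ℝ) else β / ((t:ℝ)+1))
          = (t:ℝ) * (β / ((t:ℝ)+1)) - β / ((t:ℝ)+1) := by
        have : ∀ q : Fin t, (if q = p then (0:ℝ) else β / ((t:ℝ)+1))
            = β / ((t:ℝ)+1) - (if q = p then β / ((t:ℝ)+1) else 0) := by
          intro q; split <;> ring
        rw [Finset.sum_congr rfl fun q _ => this q, Finset.sum_sub_distrib,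
          Fintype.sum_ite_eq' p (fun _ => β / ((t:ℝ)+1))]
        simp [mul_comm]
      have h3 : (t:ℝ) * (β / ((t:ℝ)+1)) = β - β / ((t:ℝ)+1) := by
        field_simp
        ring
      have h4 := abs_le.mp (hXb p p)
      have h5 := hZb p
      rw [hYss, if_pos rfl]
      linarith
  have hPSD : Y.PosSemidef := posSemidef_of_diagdom Y hsymm hdom
  have hY00' : Y 0 0 = ((t+1 : ℕ) : ℝ) := by rw [hY00]; push_cast; ring
  obtain ⟨a, haa, ha0⟩ := gram_realize Y hPSD 0 hY00'
  have hYkk : ∀ p : Fin t, Y p.succ p.succ = X p p + β := fun p => by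
    rw [hYss, if_pos rfl]
  have hbound : ∀ (p : Fin t) (l : Fin (t+1)), (a p.succ l)^2 ≤ X p p + β := by
    intro p l
    have h1 := Finset.single_le_sum (f := fun l' => a p.succ l' * a p.succ l')
      (fun l' _ => mul_self_nonneg _) (mem_univ l)
    rw [haa, hYkk] at h1
    have h1' : a p.succ l * a p.succ l ≤ X p p + β := h1
    nlinarith [h1']
  have hXβ1 : ∀ p : Fin t, X p p + β ≤ 1 := by
    intro p
    have h4 := abs_le.mp (hXb p p)
    have : β / ((t:ℝ)+1) ≤ β := div_le_self hβ0.le (by linarith)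
    linarith
  refine ⟨fun i l => if h : (l : ℕ) < t + 1 then a i.succ ⟨l, h⟩ else 0,
    fun i l => ?_, fun i j hij => ?_, fun i => ?_, fun i => ?_⟩
  · dsimp only
    simp only [Set.mem_Icc]
    by_cases h : (l : ℕ) < t + 1
    · rw [dif_pos h]
      have hb := hbound i ⟨l, h⟩
      have h1 := hXβ1 i
      constructor
      · nlinarith [hb]
      · nlinarith [hb]
    · rw [dif_neg h]
      constructor <;> norm_num
  · dsimp only
    have hy2 : ∀ l : Fin d,
        (if h : (l : ℕ) < t + 1 then a i.succ ⟨l, h⟩ else 0) *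
        (if h : (l : ℕ) < t + 1 then a j.succ ⟨l, h⟩ else 0)
        = if h : (l : ℕ) < t + 1 then a i.succ ⟨l, h⟩ * a j.succ ⟨l, h⟩ else 0 := by
      intro l; by_cases h : (l : ℕ) < t + 1 <;> simp [h]
    rw [Finset.sum_congr rfl fun l _ => hy2 l,
      pad_sum hd (fun k => a i.succ k * a j.succ k), haa, hYss,
      if_neg (fun hc => hij hc)]
  · dsimp only
    have hy2 : ∀ l : Fin d,
        (if h : (l : ℕ) < t + 1 then a i.succ ⟨l, h⟩ else 0) *
        (if h : (l : ℕ) < t + 1 then a i.succ ⟨l, h⟩ else 0)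
        = if h : (l : ℕ) < t + 1 then a i.succ ⟨l, h⟩ * a i.succ ⟨l, h⟩ else 0 := by
      intro l; by_cases h : (l : ℕ) < t + 1 <;> simp [h]
    rw [Finset.sum_congr rfl fun l _ => hy2 l,
      pad_sum hd (fun k => a i.succ k * a i.succ k), haa, hYss, if_pos rfl]
  · dsimp only
    rw [pad_sum hd (fun k => a i.succ k)]
    have : ∑ k, a i.succ k = ∑ k, a i.succ k * a 0 k :=
      Finset.sum_congr rfl fun k _ => by rw [ha0 k, mul_one]
    rw [this, haa, hYs0]
end

section
/- Let ν be a probability distribution on {-1,1}^k whose coordinate biases are (ζ(1),...,ζ(k)) with each |ζ(j)| ≤ 1−√ε for ε ∈ (0,1/4), and let targets r_1,...,r_k satisfy |r_j − ζ(j)| ≤ ε and |r_j| ≤ 1−√ε. Then there exists a probability distribution ν' on {-1,1}^k with coordinate biases exactly (r_1,...,r_k) and total variation distance ‖ν − ν'‖₁ = O(k·√ε). -/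
private lemma sum_prod_bool (k : ℕ) (f : Fin k → Bool → ℝ) :
    ∑ b : Fin k → Bool, ∏ j, f j (b j) = ∏ j, (f j true + f j false) := by
  rw [← Fintype.prod_sum f]
  congr 1; ext j
  simp [Fintype.sum_bool, add_comm]

private lemma marginal_prod_bool (k : ℕ) (p : Fin k → Bool → ℝ)
    (hsum : ∀ j, p j true + p j false = 1) (i : Fin k) :
    ∑ b : Fin k → Bool, (∏ j, p j (b j)) * (if b i then (1 : ℝ) else -1)
      = p i true - p i false := by
  have h1 : ∀ b : Fin k → Bool,
      (∏ j, p j (b j)) * (if b i then (1 : ℝ) else -1)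
        = ∏ j, (p j (b j) * (if j = i then (if b j then (1 : ℝ) else -1) else 1)) := by
    intro b
    rw [Finset.prod_mul_distrib]
    congr 1
    rw [Finset.prod_eq_single i (by intro j _ hj; simp [hj]) (by simp)]
    simp
  simp_rw [h1]
  rw [sum_prod_bool k (fun j x => p j x * (if j = i then (if x then (1:ℝ) else -1) else 1))]
  rw [Finset.prod_eq_single i ?_ (by simp)]
  · simp; ring
  · intro j _ hj
    simp [hj, hsum j]

/-- bias correction. There is an absolute constant `c` such that: given a
distribution `ν` on `{-1,1}^k` with coordinate biases `ζ(j)` bounded by `1−√ε` in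
absolute value, and target biases `r_j` with `|r_j − ζ(j)| ≤ ε` and `|r_j| ≤ 1−√ε`,
there is a distribution `ν'` with coordinate biases exactly `r_j` and
`‖ν − ν'‖₁ ≤ c·k·√ε`. -/
theorem bias_correction :
    ∃ c : ℝ, 0 < c ∧
      ∀ (k : ℕ) (ε : ℝ), 0 < ε → ε < 1 / 4 →
      ∀ (w : (Fin k → Bool) → ℝ),
        (∀ b, 0 ≤ w b) → (∑ b : Fin k → Bool, w b = 1) →
      ∀ (r : Fin k → ℝ),
        (∀ j, |∑ b : Fin k → Bool, w b * (if b j then (1 : ℝ) else -1)| ≤ 1 - Real.sqrt ε) →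
        (∀ j, |r j - ∑ b : Fin k → Bool, w b * (if b j then (1 : ℝ) else -1)| ≤ ε) →
        (∀ j, |r j| ≤ 1 - Real.sqrt ε) →
        ∃ w' : (Fin k → Bool) → ℝ,
          (∀ b, 0 ≤ w' b) ∧ (∑ b : Fin k → Bool, w' b = 1) ∧
          (∀ j, ∑ b : Fin k → Bool, w' b * (if b j then (1 : ℝ) else -1) = r j) ∧
          (∑ b : Fin k → Bool, |w b - w' b|) ≤ c * k * Real.sqrt ε := by
  refine ⟨2, by norm_num, ?_⟩
  intro k ε hε hε4 w hw hw1 r hζ hr hr1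
  rcases Nat.eq_zero_or_pos k with hk | hk
  · subst hk
    exact ⟨w, hw, hw1, fun j => j.elim0, by simp⟩
  set s := Real.sqrt ε with hs
  have hs0 : 0 < s := Real.sqrt_pos.mpr hε
  have hss : s * s = ε := Real.mul_self_sqrt hε.le
  have hshalf : s < 1 / 2 := by
    nlinarith [hss, hs0]
  set ζ : Fin k → ℝ := fun j => ∑ b : Fin k → Bool, w b * (if b j then (1 : ℝ) else -1)
    with hζdef
  set d : Fin k → ℝ := fun j => ζ j + (r j - ζ j) / s with hd
  have hd1 : ∀ j, |d j| ≤ 1 := by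
    intro j
    have h1 : |d j| ≤ |ζ j| + |r j - ζ j| / s := by
      calc |d j| ≤ |ζ j| + |(r j - ζ j) / s| := abs_add_le _ _
        _ = |ζ j| + |r j - ζ j| / s := by rw [abs_div, abs_of_pos hs0]
    have h2 : |r j - ζ j| / s ≤ ε / s := by
      exact div_le_div_of_nonneg_right (hr j) hs0.le
    have h3 : ε / s = s := by field_simp; linarith [hss]
    have := hζ j
    calc |d j| ≤ |ζ j| + |r j - ζ j| / s := h1
      _ ≤ (1 - s) + s := by rw [h3] at h2; linarith [this]
      _ = 1 := by ring
  -- product distribution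
  set p : Fin k → Bool → ℝ := fun j x => if x then (1 + d j) / 2 else (1 - d j) / 2 with hp
  have hpnn : ∀ j x, 0 ≤ p j x := by
    intro j x
    have h := hd1 j
    rw [abs_le] at h
    obtain ⟨h1, h2⟩ := h
    cases x
    · simp only [hp]; norm_num
      exact div_nonneg (by linarith) (by norm_num)
    · simp only [hp]; norm_num
      exact div_nonneg (by linarith) (by norm_num)
  have hpsum : ∀ j, p j true + p j false = 1 := by intro j; simp [hp]; ring
  set D : (Fin k → Bool) → ℝ := fun b => ∏ j, p j (b j) with hD
  have hDnn : ∀ b, 0 ≤ D b := fun b => Finset.prod_nonneg fun j _ => hpnn j (b j)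
  have hDsum : ∑ b : Fin k → Bool, D b = 1 := by
    rw [hD, sum_prod_bool]
    simp [hpsum]
  have hDbias : ∀ j, ∑ b : Fin k → Bool, D b * (if b j then (1 : ℝ) else -1) = d j := by
    intro j
    rw [hD]
    rw [marginal_prod_bool k p hpsum j]
    simp [hp]; ring
  refine ⟨fun b => (1 - s) * w b + s * D b, ?_, ?_, ?_, ?_⟩
  · intro b
    have h1 : (0:ℝ) ≤ 1 - s := by linarith
    exact add_nonneg (mul_nonneg h1 (hw b)) (mul_nonneg hs0.le (hDnn b))
  · rw [Finset.sum_add_distrib, ← Finset.mul_sum, ← Finset.mul_sum, hw1, hDsum]; ring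
  · intro j
    have : ∑ b : Fin k → Bool, ((1 - s) * w b + s * D b) * (if b j then (1 : ℝ) else -1)
        = (1 - s) * ζ j + s * d j := by
      simp_rw [add_mul, mul_assoc]
      rw [Finset.sum_add_distrib, ← Finset.mul_sum, ← Finset.mul_sum, hDbias j]
    rw [this, hd]
    simp only
    have hc : s * ((r j - ζ j) / s) = r j - ζ j := by
      field_simp
    rw [mul_add, hc]
    ring
  · have hb : ∀ b, |w b - ((1 - s) * w b + s * D b)| ≤ s * w b + s * D b := by
      intro b
      have : w b - ((1 - s) * w b + s * D b) = s * w b - s * D b := by ring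
      rw [this]
      calc |s * w b - s * D b| ≤ |s * w b| + |s * D b| := abs_sub _ _
        _ = s * w b + s * D b := by
            rw [abs_of_nonneg (mul_nonneg hs0.le (hw b)),
              abs_of_nonneg (mul_nonneg hs0.le (hDnn b))]
    calc ∑ b : Fin k → Bool, |w b - ((1 - s) * w b + s * D b)|
        ≤ ∑ b : Fin k → Bool, (s * w b + s * D b) := Finset.sum_le_sum fun b _ => hb b
      _ = 2 * s := by
          rw [Finset.sum_add_distrib, ← Finset.mul_sum, ← Finset.mul_sum, hw1, hDsum]; ring
      _ ≤ 2 * k * s := by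
          have : (1:ℝ) ≤ k := by exact_mod_cast hk
          nlinarith
end
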